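/- Let g : ℝ^d → ℝ ∪ {+∞} be proper lower semicontinuous convex with Fenchel conjugate g*, let C ⊆ ℝ^d be a nonempty compact convex set, and define the concave function φ(w) = ⟨w, x⟩ − g*(w) for a fixed x ∈ ℝ^d; assume φ is finite on C. Let ε ≥ 0 and let {w^t}_{t≥0} ⊆ C and {s^t} be sequences such that s^t ∈ ∂_ε φ(w^t) (ε-superdifferential of the concave function φ) and w^{t+1} minimizes ⟨s^t, w⟩ over w ∈ C, for all t. Define gap(w^t) = max_{w ∈ C} ⟨s^t, w^t − w⟩. Then for every T ≥ 1: min_{0 ≤ t ≤ T−1} gap(w^t) ≤ (φ(w^0) − min_{w ∈ C} φ(w))/T + ε. -/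

import Mathlib

open RealInnerProductSpace

noncomputable section

/-- Euclidean space `ℝ^d`. -/
abbrev E (d : ℕ) := EuclideanSpace ℝ (Fin d)

/-- Convexity for extended-real-valued functions `ℝ^d → ℝ ∪ {+∞}` (modelled in `EReal`). -/
def ERealConvex {d : ℕ} (f : E d → EReal) : Prop :=
  ∀ x y : E d, ∀ t : ℝ, 0 ≤ t → t ≤ 1 →
    f ((1 - t) • x + t • y) ≤ ((1 - t : ℝ) : EReal) * f x + (t : EReal) * f y

/-- A proper function: never `−∞` and not identically `+∞`. -/
def ERealProper {d : ℕ} (f : E d → EReal) : Prop :=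
  (∀ x, f x ≠ ⊥) ∧ (∃ x, f x ≠ ⊤)

/-- The ε-subdifferential of `f` at `x`: the set of `y` such that `f x` is finite and
`f z ≥ f x + ⟨y, z − x⟩ − ε` for all `z`. -/
def epsSubdiff {d : ℕ} (f : E d → EReal) (ε : ℝ) (x : E d) : Set (E d) :=
  {y | (∃ r : ℝ, f x = (r : EReal)) ∧
    ∀ z : E d, f x + ((⟪y, z - x⟫ - ε : ℝ) : EReal) ≤ f z}

/-- The Fenchel conjugate `f*(y) = sup_x (⟨x, y⟩ − f(x))`, valued in `EReal`. -/
def eConj {d : ℕ} (f : E d → EReal) (y : E d) : EReal :=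
  ⨆ x : E d, (((⟪x, y⟫ : ℝ) : EReal) - f x)

/-- Approximate Frank–Wolfe with step size 1 on the concave function
`φ(w) = ⟨w, x⟩ − g*(w)` over a nonempty compact convex set `C` (with `φ` finite on `C`):
if `s^t ∈ ∂_ε φ(w^t)` (ε-superdifferential) and `w^{t+1}` minimizes `⟨s^t, ·⟩` over `C`,
then for every `T ≥ 1`,
`min_{0 ≤ t < T} gap(w^t) ≤ (φ(w^0) − min_{w ∈ C} φ(w))/T + ε`, where
`gap(w^t) = max_{w ∈ C} ⟨s^t, w^t − w⟩`. -/
theorem stmt11 {d : ℕ} (g : E d → EReal)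
    (hg_proper : ERealProper g) (hg_convex : ERealConvex g) (hg_lsc : LowerSemicontinuous g)
    (C : Set (E d)) (hCne : C.Nonempty) (hCcompact : IsCompact C) (hCconvex : Convex ℝ C)
    (x : E d)
    (φ : E d → EReal) (hφ : φ = fun v => ((⟪v, x⟫ : ℝ) : EReal) - eConj g v)
    (hfin : ∀ v ∈ C, ∃ r : ℝ, φ v = (r : EReal))
    (ε : ℝ) (hε : 0 ≤ ε)
    (w : ℕ → E d) (s : ℕ → E d)
    (hwC : ∀ t, w t ∈ C)
    (hs : ∀ t : ℕ, ∀ v : E d, φ v ≤ φ (w t) + ((⟪s t, v - w t⟫ + ε : ℝ) : EReal))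
    (hlin : ∀ t : ℕ, ∀ u ∈ C, ⟪s t, w (t + 1)⟫ ≤ ⟪s t, u⟫)
    (T : ℕ) (hT : 1 ≤ T) :
    ∃ t < T, ((sSup ((fun u => ⟪s t, w t - u⟫) '' C) : ℝ) : EReal) ≤
      (φ (w 0) - sInf (φ '' C)) / (T : EReal) + (ε : EReal) := by
  choose r hr using fun t => hfin (w t) (hwC t)
  set gp : ℕ → ℝ := fun t => ⟪s t, w t - w (t + 1)⟫ with hgp
  have hsup : ∀ t, sSup ((fun u => ⟪s t, w t - u⟫) '' C) = gp t := by
    intro t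
    apply IsGreatest.csSup_eq
    constructor
    · exact ⟨w (t + 1), hwC (t + 1), rfl⟩
    · rintro a ⟨u, hu, rfl⟩
      simp only [hgp, inner_sub_right]
      have := hlin t u hu
      linarith
  have key : ∀ t, gp t ≤ r t - r (t + 1) + ε := by
    intro t
    have h := hs t (w (t + 1))
    rw [hr t, hr (t + 1), ← EReal.coe_add] at h
    have h' := EReal.coe_le_coe_iff.mp h
    have heq : ⟪s t, w (t + 1) - w t⟫ = -(gp t) := by
      simp only [hgp, inner_sub_right]; ring
    rw [heq] at h'
    linarith
  have hTpos : (0 : ℝ) < T := by exact_mod_cast hT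
  obtain ⟨t0, ht0mem, ht0min⟩ :=
    (Finset.range T).exists_min_image gp ⟨0, Finset.mem_range.mpr hT⟩
  have ht0 : t0 < T := Finset.mem_range.mp ht0mem
  have hsum : (T : ℝ) * gp t0 ≤ ∑ i ∈ Finset.range T, gp i := by
    calc (T : ℝ) * gp t0 = ∑ _i ∈ Finset.range T, gp t0 := by
          simp [Finset.sum_const, nsmul_eq_mul]
      _ ≤ ∑ i ∈ Finset.range T, gp i := Finset.sum_le_sum fun i hi => ht0min i hi
  have hsum2 : ∑ i ∈ Finset.range T, gp i ≤ r 0 - r T + T * ε := by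
    calc ∑ i ∈ Finset.range T, gp i
        ≤ ∑ i ∈ Finset.range T, (r i - r (i + 1) + ε) :=
          Finset.sum_le_sum fun i _ => key i
      _ = (r 0 - r T) + T * ε := by
          rw [Finset.sum_add_distrib, Finset.sum_range_sub' r]
          simp [mul_comm]
  have hbound : gp t0 ≤ (r 0 - r T) / T + ε := by
    rw [← sub_le_iff_le_add, div_eq_inv_mul, ← mul_le_mul_iff_right₀ hTpos]
    calc (T : ℝ) * (gp t0 - ε) = (T : ℝ) * gp t0 - T * ε := by ring
      _ ≤ r 0 - r T := by linarith
      _ = (T : ℝ) * ((T : ℝ)⁻¹ * (r 0 - r T)) := by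
          field_simp
  refine ⟨t0, ht0, ?_⟩
  rw [hsup t0, hr 0]
  have hmem : φ (w T) ∈ φ '' C := ⟨w T, hwC T, rfl⟩
  have hinf_le : sInf (φ '' C) ≤ (r T : EReal) := by
    rw [← hr T]; exact sInf_le hmem
  rcases eq_or_ne (sInf (φ '' C)) ⊥ with hbot | hbot
  · rw [hbot, EReal.coe_sub_bot,
      EReal.top_div_of_pos_ne_top (by exact_mod_cast hTpos) (EReal.natCast_ne_top T),
      EReal.top_add_coe]
    exact le_top
  · have hne_top : sInf (φ '' C) ≠ ⊤ := by
      intro h; rw [h] at hinf_le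
      exact (EReal.coe_ne_top (r T)) (top_le_iff.mp hinf_le)
    lift sInf (φ '' C) to ℝ using ⟨hne_top, hbot⟩ with m hm
    have hmle : m ≤ r T := EReal.coe_le_coe_iff.mp hinf_le
    rw [← EReal.coe_sub, ← EReal.coe_coe_eq_natCast, ← EReal.coe_div, ← EReal.coe_add,
      EReal.coe_le_coe_iff]
    calc gp t0 ≤ (r 0 - r T) / T + ε := hbound
      _ ≤ (r 0 - m) / T + ε := by gcongr <;> linarith
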